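/- For every k ∈ ℕ, both univariate polynomials 1 + T_k(t) and 1 − T_k(t) belong to the truncated pre-ordering 𝒯(1−t, 1+t)_k. -/

import Mathlib

/-- Truncated pre-ordering generated by univariate polynomials `g i`, with degree
bound `r`: sums `∑_{I ⊆ ι} σ_I ∏_{i ∈ I} g i` with each `σ_I` a sum of squares and
each term `σ_I ∏_{i ∈ I} g i` of degree at most `r`. -/
def truncPreUniv {ι : Type} [Fintype ι] [DecidableEq ι]
    (g : ι → Polynomial ℝ) (r : ℕ) : Set (Polynomial ℝ) :=
  {p | ∃ s : Finset ι → Polynomial ℝ,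
    (∀ I, IsSumSq (s I)) ∧
    (∀ I : Finset ι, (s I * ∏ i ∈ I, g i).natDegree ≤ r) ∧
    p = ∑ I : Finset ι, s I * ∏ i ∈ I, g i}

namespace ChebyAux

open Polynomial Polynomial.Chebyshev

theorem my_mul_U_T (m n : ℤ) : 2 * T ℝ m * U ℝ n = U ℝ (n + m) + U ℝ (n - m) := by
  induction m using Polynomial.Chebyshev.induct with
  | zero => simp [two_mul]
  | one => rw [U_add_one, T_one]; ring
  | add_two m ih1 ih2 =>
    have h₁ := U_add_two ℝ (n + m)
    have h₂ := U_sub_two ℝ (n - m)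
    have h₃ := T_add_two ℝ m
    linear_combination (norm := ring_nf) 2 * U ℝ n * h₃ - h₂ - h₁ - ih2 + 2 * (X : ℝ[X]) * ih1
  | neg_add_one m ih1 ih2 =>
    have h₁ := U_add_two ℝ (n + (-m - 1))
    have h₂ := U_sub_two ℝ (n - (-m - 1))
    have h₃ := T_add_two ℝ (-m - 1)
    linear_combination (norm := ring_nf) 2 * U ℝ n * h₃ - h₂ - h₁ - ih2 + 2 * (X : ℝ[X]) * ih1

theorem my_mul_U_U (a b : ℤ) :
    2 * (1 - X ^ 2) * U ℝ a * U ℝ b = T ℝ (a - b) - T ℝ (a + b + 2) := by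
  have h1 := one_sub_X_sq_mul_U_eq_pol_in_T ℝ b
  have h2 := my_mul_U_T (b + 1) a
  have h3 := my_mul_U_T (b + 2) a
  have h4 := U_eq_X_mul_U_add_T ℝ (a + b + 1)
  have h5 := U_eq_X_mul_U_add_T ℝ (a - b - 1)
  have h6 := U_sub_two ℝ (a - b)
  linear_combination (norm := ring_nf) 2 * U ℝ a * h1 + X * h2 - h3 - h4 + h5 - h6

theorem idA (m : ℤ) : 1 + T ℝ (2 * m) = T ℝ m ^ 2 + T ℝ m ^ 2 := by
  have h := T_mul_T ℝ m m
  rw [show m - m = 0 by ring, T_zero, show m + m = 2 * m by ring] at h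
  linear_combination -h

theorem idB (m : ℤ) : 1 - T ℝ (2 * m) =
    (U ℝ (m - 1) ^ 2 + U ℝ (m - 1) ^ 2) * ((1 - X) * (1 + X)) := by
  have h := my_mul_U_U (m - 1) (m - 1)
  rw [show m - 1 - (m - 1) = 0 by ring, T_zero, show m - 1 + (m - 1) + 2 = 2 * m by ring] at h
  linear_combination -h

theorem idC (m : ℤ) : 1 + T ℝ (2 * m + 1) =
    ((U ℝ m - U ℝ (m - 1)) ^ 2) * (1 + X) := by
  have hne : (1 - X : ℝ[X]) ≠ 0 := fun h => by
    have := congrArg (Polynomial.eval 0) h; simp at this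
  have h2ne : (2 : ℝ[X]) ≠ 0 := fun h => by
    have := congrArg (Polynomial.eval 0) h; simp at this
  apply mul_left_cancel₀ h2ne
  apply mul_left_cancel₀ hne
  have e1 := my_mul_U_U m m
  have e2 := my_mul_U_U m (m - 1)
  have e3 := my_mul_U_U (m - 1) (m - 1)
  have e4 := T_mul_T ℝ (2 * m + 1) 1
  rw [show m - m = 0 by ring, T_zero] at e1
  rw [show m - (m - 1) = 1 by ring, T_one] at e2
  rw [show m - 1 - (m - 1) = 0 by ring, T_zero] at e3
  rw [T_one] at e4
  linear_combination (norm := ring_nf) -e1 + 2 * e2 - e3 - e4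

theorem idD (m : ℤ) : 1 - T ℝ (2 * m + 1) =
    ((U ℝ m + U ℝ (m - 1)) ^ 2) * (1 - X) := by
  have hne : (1 + X : ℝ[X]) ≠ 0 := fun h => by
    have := congrArg (Polynomial.eval 0) h; simp at this
  have h2ne : (2 : ℝ[X]) ≠ 0 := fun h => by
    have := congrArg (Polynomial.eval 0) h; simp at this
  apply mul_left_cancel₀ h2ne
  apply mul_left_cancel₀ hne
  have e1 := my_mul_U_U m m
  have e2 := my_mul_U_U m (m - 1)
  have e3 := my_mul_U_U (m - 1) (m - 1)
  have e4 := T_mul_T ℝ (2 * m + 1) 1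
  rw [show m - m = 0 by ring, T_zero] at e1
  rw [show m - (m - 1) = 1 by ring, T_one] at e2
  rw [show m - 1 - (m - 1) = 0 by ring, T_zero] at e3
  rw [T_one] at e4
  linear_combination (norm := ring_nf) -e1 - 2 * e2 - e3 - e4

theorem my_natDegree_T_le : ∀ n : ℕ, (T ℝ (n : ℤ)).natDegree ≤ n
  | 0 => by simp [T_zero]
  | 1 => by simp [T_one]
  | (n+2) => by
    have h := T_add_two ℝ (n : ℤ)
    rw [show ((n+2 : ℕ) : ℤ) = (n : ℤ) + 2 by push_cast; ring, h]
    have hX : ((2 : ℝ[X]) * X).natDegree ≤ 1 := natDegree_mul_le.trans (by simp)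
    have ha : ((2 : ℝ[X]) * X * T ℝ ((n : ℤ) + 1)).natDegree ≤ 1 + (n + 1) := by
      refine natDegree_mul_le.trans (add_le_add hX ?_)
      exact_mod_cast my_natDegree_T_le (n + 1)
    have hb := my_natDegree_T_le n
    refine (natDegree_sub_le _ _).trans (max_le (ha.trans (by omega)) (hb.trans (by omega)))

theorem my_natDegree_U_le : ∀ n : ℕ, (U ℝ (n : ℤ)).natDegree ≤ n
  | 0 => by simp [U_zero]
  | 1 => by
    rw [show ((1:ℕ):ℤ) = 1 by norm_num, U_one]
    exact natDegree_mul_le.trans (by simp)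
  | (n+2) => by
    have h := U_add_two ℝ (n : ℤ)
    rw [show ((n+2 : ℕ) : ℤ) = (n : ℤ) + 2 by push_cast; ring, h]
    have hX : ((2 : ℝ[X]) * X).natDegree ≤ 1 := natDegree_mul_le.trans (by simp)
    have ha : ((2 : ℝ[X]) * X * U ℝ ((n : ℤ) + 1)).natDegree ≤ 1 + (n + 1) := by
      refine natDegree_mul_le.trans (add_le_add hX ?_)
      exact_mod_cast my_natDegree_U_le (n + 1)
    have hb := my_natDegree_U_le n
    refine (natDegree_sub_le _ _).trans (max_le (ha.trans (by omega)) (hb.trans (by omega)))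

theorem natDegree_U_sub_one_le (m : ℕ) : (U ℝ ((m : ℤ) - 1)).natDegree ≤ m := by
  cases m with
  | zero => simp [U_neg_one]
  | succ j =>
    rw [show (((j+1 : ℕ) : ℤ) - 1) = (j : ℤ) by push_cast; ring]
    exact (my_natDegree_U_le j).trans (by omega)

theorem isSumSq_sq (p : ℝ[X]) : IsSumSq (p ^ 2) := by
  rw [sq]
  simpa using IsSumSq.sq_add p 0 IsSumSq.zero

theorem sum_fin2 (f : Finset (Fin 2) → ℝ[X]) :
    ∑ I : Finset (Fin 2), f I = f ∅ + f {0} + f {1} + f {0,1} := by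
  have : (Finset.univ : Finset (Finset (Fin 2))) = {∅, {0}, {1}, {0,1}} := by decide
  rw [this, Finset.sum_insert (by decide), Finset.sum_insert (by decide),
    Finset.sum_insert (by decide), Finset.sum_singleton]
  ring

theorem mem_helper (k : ℕ) (p s0 s1 s2 s3 : ℝ[X])
    (h0 : IsSumSq s0) (h1 : IsSumSq s1) (h2 : IsSumSq s2) (h3 : IsSumSq s3)
    (d0 : s0.natDegree ≤ k) (d1 : (s1 * (1 - X)).natDegree ≤ k)
    (d2 : (s2 * (1 + X)).natDegree ≤ k) (d3 : (s3 * ((1 - X) * (1 + X))).natDegree ≤ k)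
    (hp : p = s0 + s1 * (1 - X) + s2 * (1 + X) + s3 * ((1 - X) * (1 + X))) :
    p ∈ truncPreUniv ![1 - X, 1 + X] k := by
  classical
  set g : Fin 2 → ℝ[X] := ![1 - X, 1 + X] with hg
  have hprod : ∀ I : Finset (Fin 2), ∏ i ∈ I, g i =
      if I = ∅ then 1 else if I = {0} then 1 - X else if I = {1} then 1 + X
        else (1 - X) * (1 + X) := by
    intro I
    fin_cases I <;>
      simp (config := { decide := true }) [hg,
        Finset.prod_pair (show (0 : Fin 2) ≠ 1 by decide)]
  refine ⟨fun I => if I = ∅ then s0 else if I = {0} then s1 else if I = {1} then s2 else s3,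
    ?_, ?_, ?_⟩
  · intro I
    dsimp only
    split_ifs <;> assumption
  · intro I
    rw [hprod I]
    fin_cases I <;> simpa using by first | exact d0 | exact d1 | exact d2 | exact d3
  · rw [sum_fin2]
    simp only [hprod]
    rw [hp]
    simp (config := { decide := true })

theorem natDegree_one_sub_X : (1 - X : ℝ[X]).natDegree ≤ 1 :=
  (natDegree_sub_le _ _).trans (by simp)

theorem natDegree_one_add_X : (1 + X : ℝ[X]).natDegree ≤ 1 :=
  (natDegree_add_le _ _).trans (by simp)

end ChebyAux

open Polynomial Polynomial.Chebyshev ChebyAux in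
/-- For every `k`, both `1 + T_k` and `1 − T_k` lie in the truncated pre-ordering
`𝒯(1−t, 1+t)_k`, where `T_k` is the `k`-th Chebyshev polynomial of the first kind. -/
theorem one_add_chebyshev_mem_truncPre (k : ℕ) :
    1 + Polynomial.Chebyshev.T ℝ k ∈
      truncPreUniv ![1 - Polynomial.X, 1 + Polynomial.X] k ∧
    1 - Polynomial.Chebyshev.T ℝ k ∈
      truncPreUniv ![1 - Polynomial.X, 1 + Polynomial.X] k := by
  rcases Nat.even_or_odd k with ⟨m, hm⟩ | ⟨m, hm⟩
  · -- k = m + m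
    have hcast : (k : ℤ) = 2 * (m : ℤ) := by push_cast [hm]; ring
    constructor
    · refine mem_helper k _ (T ℝ (m : ℤ) ^ 2 + T ℝ (m : ℤ) ^ 2) 0 0 0
        ((isSumSq_sq _).add (isSumSq_sq _)) IsSumSq.zero IsSumSq.zero IsSumSq.zero
        ?_ (by simp) (by simp) (by simp) ?_
      · refine (natDegree_add_le _ _).trans (max_le ?_ ?_) <;>
        · refine natDegree_pow_le.trans ?_
          have := my_natDegree_T_le m
          omega
      · rw [hcast]
        linear_combination idA (m : ℤ)
    · cases m with
      | zero =>
        refine mem_helper k _ 0 0 0 0 IsSumSq.zero IsSumSq.zero IsSumSq.zero IsSumSq.zero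
          (by simp) (by simp) (by simp) (by simp) ?_
        have hk : k = 0 := by omega
        rw [hk]
        simp [T_zero]
      | succ j =>
        refine mem_helper k _ 0 0 0 (U ℝ (j : ℤ) ^ 2 + U ℝ (j : ℤ) ^ 2)
          IsSumSq.zero IsSumSq.zero IsSumSq.zero ((isSumSq_sq _).add (isSumSq_sq _))
          (by simp) (by simp) (by simp) ?_ ?_
        · refine natDegree_mul_le.trans ?_
          have hU := my_natDegree_U_le j
          have h1 : ((U ℝ (j:ℤ) ^ 2 + U ℝ (j:ℤ) ^ 2)).natDegree ≤ 2 * j :=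
            (natDegree_add_le _ _).trans (max_le
              (natDegree_pow_le.trans (by omega)) (natDegree_pow_le.trans (by omega)))
          have h2 : ((1 - X) * (1 + X) : ℝ[X]).natDegree ≤ 2 :=
            natDegree_mul_le.trans (by
              have := natDegree_one_sub_X
              have := natDegree_one_add_X
              omega)
          omega
        · have hB := idB ((j : ℤ) + 1)
          rw [show ((j : ℤ) + 1 - 1) = (j : ℤ) by ring] at hB
          rw [show ((k : ℤ)) = 2 * ((j : ℤ) + 1) by push_cast [hm]; ring]
          linear_combination hB
  · -- k = 2 * m + 1
    have hcast : (k : ℤ) = 2 * (m : ℤ) + 1 := by push_cast [hm]; ring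
    have hUm := my_natDegree_U_le m
    have hUm1 := natDegree_U_sub_one_le m
    constructor
    · refine mem_helper k _ 0 0 ((U ℝ (m : ℤ) - U ℝ ((m : ℤ) - 1)) ^ 2) 0
        IsSumSq.zero IsSumSq.zero (isSumSq_sq _) IsSumSq.zero
        (by simp) (by simp) ?_ (by simp) ?_
      · refine natDegree_mul_le.trans ?_
        have h1 : ((U ℝ (m:ℤ) - U ℝ ((m:ℤ) - 1)) ^ 2).natDegree ≤ 2 * m :=
          natDegree_pow_le.trans (by
            have := natDegree_sub_le (U ℝ (m:ℤ)) (U ℝ ((m:ℤ) - 1))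
            omega)
        have := natDegree_one_add_X
        omega
      · rw [hcast]
        linear_combination idC (m : ℤ)
    · refine mem_helper k _ 0 ((U ℝ (m : ℤ) + U ℝ ((m : ℤ) - 1)) ^ 2) 0 0
        IsSumSq.zero (isSumSq_sq _) IsSumSq.zero IsSumSq.zero
        (by simp) ?_ (by simp) (by simp) ?_
      · refine natDegree_mul_le.trans ?_
        have h1 : ((U ℝ (m:ℤ) + U ℝ ((m:ℤ) - 1)) ^ 2).natDegree ≤ 2 * m :=
          natDegree_pow_le.trans (by
            have := natDegree_add_le (U ℝ (m:ℤ)) (U ℝ ((m:ℤ) - 1))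
            omega)
        have := natDegree_one_sub_X
        omega
      · rw [hcast]
        linear_combination idD (m : ℤ)
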